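/- Let f : S¹ → ℂ be a function on the unit circle which is a times continuously differentiable with β-Hölder a-th derivative, where a ∈ ℕ and β ∈ (0,1). Then its n-th Fourier coefficient c_n = (1/2π) ∫₀^{2π} f(e^{it}) e^{-int} dt satisfies c_n = O(n^{-a-β}) as n → ∞. -/

import Mathlib

open Real

/-- `β`-Hölder (for small distances) on ℝ. -/
def HolderR (β : ℝ) (h : ℝ → ℂ) : Prop :=
  ∃ C > 0, ∀ t s : ℝ, |t - s| ≤ Real.pi → ‖h t - h s‖ ≤ C * |t - s| ^ β

/-- Class of periodic functions that are `j` times differentiable with `β`-Hölder `j`-th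
derivative. -/
def SClass (β : ℝ) : ℕ → (ℝ → ℂ) → Prop
  | 0, h => Continuous h ∧ Function.Periodic h (2 * Real.pi) ∧ HolderR β h
  | (j+1), h => Continuous h ∧ Function.Periodic h (2 * Real.pi) ∧
      ∃ h', (∀ t, HasDerivAt h (h' t) t) ∧ SClass β j h'

lemma SClass.continuous {β : ℝ} {j : ℕ} {h : ℝ → ℂ} (H : SClass β j h) : Continuous h := by
  cases j <;> exact H.1

lemma SClass.periodic {β : ℝ} {j : ℕ} {h : ℝ → ℂ} (H : SClass β j h) :
    Function.Periodic h (2 * Real.pi) := by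
  cases j <;> exact H.2.1

lemma bounded_of_periodic {h : ℝ → ℂ} (hc : Continuous h)
    (hp : Function.Periodic h (2 * Real.pi)) : ∃ M > 0, ∀ t, ‖h t‖ ≤ M := by
  obtain ⟨M, hM⟩ := (isCompact_Icc (a := (0:ℝ)) (b := 2 * Real.pi)).exists_bound_of_continuousOn
    hc.continuousOn
  have hM0 : 0 ≤ M := le_trans (norm_nonneg _) (hM 0 ⟨le_rfl, by positivity⟩)
  refine ⟨M + 1, by linarith, fun t => ?_⟩
  obtain ⟨y, hy, hyt⟩ := hp.exists_mem_Ico₀ (by positivity) t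
  calc ‖h t‖ = ‖h y‖ := by rw [hyt]
    _ ≤ M := hM y ⟨hy.1, hy.2.le⟩
    _ ≤ M + 1 := by linarith

lemma lip_of_deriv {h h' : ℝ → ℂ} {M : ℝ} (hd : ∀ t, HasDerivAt h (h' t) t)
    (hb : ∀ t, ‖h' t‖ ≤ M) (t s : ℝ) : ‖h t - h s‖ ≤ M * |t - s| := by
  have := Convex.norm_image_sub_le_of_norm_hasDerivWithin_le
    (f := h) (f' := h') (s := Set.univ) (fun x _ => (hd x).hasDerivWithinAt)
    (fun x _ => hb x) convex_univ (Set.mem_univ s) (Set.mem_univ t)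
  simpa [Real.norm_eq_abs, abs_sub_comm] using this

/-- bound `x ≤ π^(1-β) x^β` for `0 ≤ x ≤ π`. -/
lemma le_rpow_aux {x β : ℝ} (hx : 0 ≤ x) (hxπ : x ≤ Real.pi) (hβ0 : 0 < β) (hβ1 : β < 1) :
    x ≤ Real.pi ^ (1 - β) * x ^ β := by
  rcases eq_or_lt_of_le hx with rfl | hx0
  · simp [Real.zero_rpow hβ0.ne']
  · calc x = x ^ (1 - β) * x ^ β := by
          rw [← Real.rpow_add hx0]; simp
    _ ≤ Real.pi ^ (1 - β) * x ^ β := by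
        gcongr

noncomputable def eI (t : ℝ) : ℂ := Complex.exp (t * Complex.I)

lemma eI_deriv (t : ℝ) : HasDerivAt eI (Complex.I * eI t) t := by
  have h1 : HasDerivAt (fun t : ℝ => (t : ℂ) * Complex.I) Complex.I t := by
    simpa using (Complex.ofRealCLM.hasDerivAt (x := t)).mul_const Complex.I
  have := (Complex.hasDerivAt_exp (t * Complex.I)).scomp t h1
  unfold eI
  simpa [Function.comp_def, mul_comm] using this

lemma eI_mem : ∀ t : ℝ, eI t ∈ Metric.sphere (0:ℂ) 1 := by
  intro t; simp [eI, Complex.norm_exp]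

lemma eI_periodic : Function.Periodic eI (2 * Real.pi) := by
  intro t
  simp [eI, Complex.ofReal_add, add_mul, Complex.exp_add, Complex.exp_two_pi_mul_I,
    Complex.ofReal_mul, Complex.ofReal_ofNat]

lemma eI_cont : Continuous eI := by
  unfold eI; fun_prop

lemma eI_norm (t : ℝ) : ‖eI t‖ = 1 := by simp [eI, Complex.norm_exp]

lemma eI_lip (t s : ℝ) : ‖eI t - eI s‖ ≤ |t - s| := by
  simpa using lip_of_deriv (M := 1) eI_deriv (fun t => by rw [norm_mul, Complex.norm_I, one_mul, eI_norm]) t s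

lemma SClass.add {β : ℝ} {j : ℕ} {g h : ℝ → ℂ} (Hg : SClass β j g) (Hh : SClass β j h) :
    SClass β j (fun t => g t + h t) := by
  induction j generalizing g h with
  | zero =>
    obtain ⟨gc, gp, Cg, hCg, hg⟩ := Hg
    obtain ⟨hc, hp, Ch, hCh, hh⟩ := Hh
    refine ⟨gc.add hc, gp.add hp, Cg + Ch, by linarith, fun t s hts => ?_⟩
    calc ‖g t + h t - (g s + h s)‖ ≤ ‖g t - g s‖ + ‖h t - h s‖ := by
          rw [show g t + h t - (g s + h s) = (g t - g s) + (h t - h s) by ring]; exact norm_add_le _ _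
      _ ≤ Cg * |t - s| ^ β + Ch * |t - s| ^ β := add_le_add (hg t s hts) (hh t s hts)
      _ = (Cg + Ch) * |t - s| ^ β := by ring
  | succ j ih =>
    obtain ⟨gc, gp, g', hg', Hg'⟩ := Hg
    obtain ⟨hc, hp, h', hh', Hh'⟩ := Hh
    exact ⟨gc.add hc, gp.add hp, fun t => g' t + h' t, fun t => (hg' t).add (hh' t),
      ih Hg' Hh'⟩

lemma SClass.const_mul {β : ℝ} {j : ℕ} {h : ℝ → ℂ} (c : ℂ) (H : SClass β j h) :
    SClass β j (fun t => c * h t) := by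
  induction j generalizing h with
  | zero =>
    obtain ⟨hc, hp, C, hC, hH⟩ := H
    refine ⟨continuous_const.mul hc, fun x => congrArg (c * ·) (hp x), (‖c‖ + 1) * C, by positivity,
      fun t s hts => ?_⟩
    calc ‖c * h t - c * h s‖ = ‖c‖ * ‖h t - h s‖ := by rw [← norm_mul]; ring_nf
      _ ≤ (‖c‖ + 1) * (C * |t - s| ^ β) := by
          have := hH t s hts
          have h1 : (0:ℝ) ≤ ‖c‖ := norm_nonneg c
          nlinarith [norm_nonneg (h t - h s)]
      _ = (‖c‖ + 1) * C * |t - s| ^ β := by ring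
  | succ j ih =>
    obtain ⟨hc, hp, h', hh', Hh'⟩ := H
    exact ⟨continuous_const.mul hc, fun x => congrArg (c * ·) (hp x), fun t => c * h' t,
      fun t => (hh' t).const_mul c, ih Hh'⟩

lemma SClass.degrade {β : ℝ} (hβ0 : 0 < β) (hβ1 : β < 1) {j : ℕ} {h : ℝ → ℂ}
    (H : SClass β (j+1) h) : SClass β j h := by
  induction j generalizing h with
  | zero =>
    obtain ⟨hc, hp, h', hh', Hh'⟩ := H
    obtain ⟨M, hM, hMb⟩ := bounded_of_periodic Hh'.continuous Hh'.periodic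
    refine ⟨hc, hp, M * Real.pi ^ (1 - β), by positivity, fun t s hts => ?_⟩
    calc ‖h t - h s‖ ≤ M * |t - s| := lip_of_deriv hh' hMb t s
      _ ≤ M * (Real.pi ^ (1 - β) * |t - s| ^ β) := by
          have := le_rpow_aux (abs_nonneg (t - s)) hts hβ0 hβ1
          nlinarith
      _ = M * Real.pi ^ (1 - β) * |t - s| ^ β := by ring
  | succ j ih =>
    obtain ⟨hc, hp, h', hh', Hh'⟩ := H
    exact ⟨hc, hp, h', hh', ih Hh'⟩

lemma SClass.mul_eI {β : ℝ} (hβ0 : 0 < β) (hβ1 : β < 1) {j : ℕ} {g : ℝ → ℂ}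
    (H : SClass β j g) : SClass β j (fun t => Complex.I * eI t * g t) := by
  induction j generalizing g with
  | zero =>
    obtain ⟨gc, gp, C, hC, hg⟩ := H
    obtain ⟨M, hM, hMb⟩ := bounded_of_periodic gc gp
    refine ⟨(continuous_const.mul eI_cont).mul gc,
      fun x => by simp only [eI_periodic x, gp x],
      C + M * Real.pi ^ (1 - β), by positivity, fun t s hts => ?_⟩
    have key : ‖Complex.I * eI t * g t - Complex.I * eI s * g s‖
        ≤ ‖g t - g s‖ + ‖eI t - eI s‖ * ‖g s‖ := by
      calc ‖Complex.I * eI t * g t - Complex.I * eI s * g s‖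
          = ‖eI t * (g t - g s) + (eI t - eI s) * g s‖ := by
            rw [show Complex.I * eI t * g t - Complex.I * eI s * g s
              = Complex.I * (eI t * (g t - g s) + (eI t - eI s) * g s) by ring,
              norm_mul, Complex.norm_I, one_mul]
        _ ≤ ‖eI t * (g t - g s)‖ + ‖(eI t - eI s) * g s‖ := norm_add_le _ _
        _ = ‖g t - g s‖ + ‖eI t - eI s‖ * ‖g s‖ := by rw [norm_mul, norm_mul, eI_norm, one_mul]
    calc ‖Complex.I * eI t * g t - Complex.I * eI s * g s‖
        ≤ ‖g t - g s‖ + ‖eI t - eI s‖ * ‖g s‖ := key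
      _ ≤ C * |t - s| ^ β + M * (Real.pi ^ (1 - β) * |t - s| ^ β) := by
          have h1 := hg t s hts
          have h2 := eI_lip t s
          have h3 := hMb s
          have h4 := le_rpow_aux (abs_nonneg (t - s)) hts hβ0 hβ1
          have h5 : ‖eI t - eI s‖ * ‖g s‖ ≤ |t - s| * M := by
            exact mul_le_mul h2 h3 (norm_nonneg _) (abs_nonneg _)
          nlinarith [norm_nonneg (g s), abs_nonneg (t - s)]
      _ = (C + M * Real.pi ^ (1 - β)) * |t - s| ^ β := by ring
  | succ j ih =>
    obtain ⟨gc, gp, g', hg', Hg'⟩ := H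
    refine ⟨(continuous_const.mul eI_cont).mul gc,
      fun x => by simp only [eI_periodic x, gp x], 
      fun t => Complex.I * eI t * (Complex.I * g t + g' t), fun t => ?_, ?_⟩
    · have h1 : HasDerivAt (fun t => Complex.I * eI t) (Complex.I * (Complex.I * eI t)) t :=
        (eI_deriv t).const_mul Complex.I
      have := h1.mul (hg' t)
      exact this.congr_deriv (by ring)
    · have Hg : SClass β (j+1) g := ⟨gc, gp, g', hg', Hg'⟩
      exact ih ((SClass.const_mul Complex.I (Hg.degrade hβ0 hβ1)).add Hg')

lemma construction {a : ℕ} {β : ℝ} (hβ0 : 0 < β) (hβ1 : β < 1) (F : ℕ → ℂ → ℂ)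
    (hcont : ∀ i ≤ a, ContinuousOn (F i) (Metric.sphere (0 : ℂ) 1))
    (hderiv : ∀ i < a, ∀ z ∈ Metric.sphere (0 : ℂ) 1,
      HasDerivWithinAt (F i) (F (i + 1) z) (Metric.sphere (0 : ℂ) 1) z)
    (hHolder : ∃ C > 0, ∀ z₁ ∈ Metric.sphere (0 : ℂ) 1, ∀ z₂ ∈ Metric.sphere (0 : ℂ) 1,
      ‖F a z₁ - F a z₂‖ ≤ C * ‖z₁ - z₂‖ ^ β) :
    ∀ j k, k + j = a → SClass β j (fun t => F k (eI t)) := by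
  intro j
  induction j with
  | zero =>
    intro k hk
    have hka : k = a := by omega
    subst hka
    obtain ⟨C, hC, hH⟩ := hHolder
    refine ⟨(hcont k le_rfl).comp_continuous eI_cont eI_mem,
      fun x => congrArg (F k) (eI_periodic x), C, hC, fun t s hts => ?_⟩
    calc ‖F k (eI t) - F k (eI s)‖ ≤ C * ‖eI t - eI s‖ ^ β :=
          hH _ (eI_mem t) _ (eI_mem s)
      _ ≤ C * |t - s| ^ β :=
          mul_le_mul_of_nonneg_left
            (Real.rpow_le_rpow (norm_nonneg _) (eI_lip t s) hβ0.le) hC.le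
  | succ j ih =>
    intro k hk
    have hka : k < a := by omega
    refine ⟨(hcont k (by omega)).comp_continuous eI_cont eI_mem,
      fun x => congrArg (F k) (eI_periodic x),
      fun t => Complex.I * eI t * F (k+1) (eI t), fun t => ?_, ?_⟩
    · have := (hderiv k hka (eI t) (eI_mem t)).scomp_hasDerivAt t (eI_deriv t) eI_mem
      exact this.congr_deriv (smul_eq_mul _ _)
    · exact SClass.mul_eI hβ0 hβ1 (ih (k+1) (by omega))


lemma expc_deriv (c : ℂ) (t : ℝ) :
    HasDerivAt (fun t : ℝ => Complex.exp (c * t)) (c * Complex.exp (c * t)) t := by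
  have h1 : HasDerivAt (fun t : ℝ => c * (t : ℂ)) c t := by
    simpa using (Complex.ofRealCLM.hasDerivAt (x := t)).const_mul c
  have := (Complex.hasDerivAt_exp (c * t)).scomp t h1
  simpa [Function.comp_def, mul_comm] using this

lemma en_eq (n : ℕ) (t : ℝ) :
    Complex.exp (-(n:ℂ) * t * Complex.I) = Complex.exp ((-(n:ℂ) * Complex.I) * t) := by
  ring_nf

lemma en_deriv (n : ℕ) (t : ℝ) :
    HasDerivAt (fun t : ℝ => Complex.exp (-(n:ℂ) * t * Complex.I))
      ((-(n:ℂ) * Complex.I) * Complex.exp (-(n:ℂ) * t * Complex.I)) t := by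
  simp only [en_eq]
  exact expc_deriv _ t

lemma en_cont (n : ℕ) : Continuous (fun t : ℝ => Complex.exp (-(n:ℂ) * t * Complex.I)) := by
  fun_prop

lemma en_norm (n : ℕ) (t : ℝ) : ‖Complex.exp (-(n:ℂ) * t * Complex.I)‖ = 1 := by
  simp [Complex.norm_exp]

lemma en_periodic (n : ℕ) :
    Function.Periodic (fun t : ℝ => Complex.exp (-(n:ℂ) * t * Complex.I)) (2 * Real.pi) := by
  intro t
  have h2 := Complex.exp_int_mul_two_pi_mul_I (-(n:ℤ))
  have h1 : -(n:ℂ) * (↑(t + 2 * Real.pi)) * Complex.I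
      = -(n:ℂ) * t * Complex.I + ((-(n:ℤ) : ℤ) : ℂ) * (2 * Real.pi * Complex.I) := by
    push_cast; ring
  simp only [h1, Complex.exp_add, h2, mul_one]

lemma en_two_pi (n : ℕ) : Complex.exp (-(n:ℂ) * (2 * Real.pi : ℝ) * Complex.I) = 1 := by
  have h2 := Complex.exp_int_mul_two_pi_mul_I (-(n:ℤ))
  have h1 : -(n:ℂ) * ((2 * Real.pi : ℝ) : ℂ) * Complex.I
      = ((-(n:ℤ) : ℤ) : ℂ) * (2 * Real.pi * Complex.I) := by push_cast; ring
  rw [h1, h2]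

lemma decay0 {β C : ℝ} (hβ0 : 0 < β) (hβ1 : β < 1) {h : ℝ → ℂ} (hc : Continuous h)
    (hp : Function.Periodic h (2 * Real.pi)) (hC : 0 < C)
    (hH : ∀ t s : ℝ, |t - s| ≤ Real.pi → ‖h t - h s‖ ≤ C * |t - s| ^ β)
    (n : ℕ) (hn : 1 ≤ n) :
    ‖∫ t in (0:ℝ)..(2*Real.pi), h t * Complex.exp (-(n:ℂ) * t * Complex.I)‖
      ≤ Real.pi * C * Real.pi ^ β * (n:ℝ) ^ (-β : ℝ) := by
  have pi_pos := Real.pi_pos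
  have hn0 : (0:ℝ) < n := by exact_mod_cast hn
  have hn1 : (1:ℝ) ≤ n := by exact_mod_cast hn
  set δ : ℝ := Real.pi / n with hδ
  have hδ0 : 0 < δ := by positivity
  have hδπ : δ ≤ Real.pi := by
    rw [hδ, div_le_iff₀ hn0]; nlinarith
  set A : ℂ := ∫ t in (0:ℝ)..(2*Real.pi), h t * Complex.exp (-(n:ℂ) * t * Complex.I) with hA
  have Gcont : Continuous fun t : ℝ => h t * Complex.exp (-(n:ℂ) * t * Complex.I) :=
    hc.mul (en_cont n)
  have Gper : Function.Periodic (fun t : ℝ => h t * Complex.exp (-(n:ℂ) * t * Complex.I))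
      (2 * Real.pi) := hp.mul (en_periodic n)
  have key1 : A = ∫ t in (0:ℝ)..(2*Real.pi),
      h (t + δ) * Complex.exp (-(n:ℂ) * (↑(t + δ)) * Complex.I) := by
    rw [hA, intervalIntegral.integral_comp_add_right
      (fun t : ℝ => h t * Complex.exp (-(n:ℂ) * t * Complex.I)) δ]
    have := Gper.intervalIntegral_add_eq 0 δ
    simp only [zero_add] at this
    rw [this]
    norm_num [add_comm]
  have key2 : ∀ t : ℝ, Complex.exp (-(n:ℂ) * (↑(t + δ)) * Complex.I)
      = - Complex.exp (-(n:ℂ) * t * Complex.I) := by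
    intro t
    have hne : (n:ℂ) ≠ 0 := by
      simp only [ne_eq, Nat.cast_eq_zero]; omega
    have harg : -(n:ℂ) * (↑(t + δ)) * Complex.I
        = -(n:ℂ) * t * Complex.I + (-(Real.pi * Complex.I)) := by
      rw [hδ]; push_cast; field_simp; ring
    rw [harg, Complex.exp_add, Complex.exp_neg, Complex.exp_pi_mul_I]
    norm_num
  have key3 : A = - ∫ t in (0:ℝ)..(2*Real.pi),
      h (t + δ) * Complex.exp (-(n:ℂ) * t * Complex.I) := by
    rw [key1, ← intervalIntegral.integral_neg]
    simp only [key2, mul_neg, neg_neg]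
  have i1 : IntervalIntegrable (fun t : ℝ => h t * Complex.exp (-(n:ℂ) * t * Complex.I))
      MeasureTheory.volume 0 (2*Real.pi) := Gcont.intervalIntegrable _ _
  have i2 : IntervalIntegrable (fun t : ℝ => h (t + δ) * Complex.exp (-(n:ℂ) * t * Complex.I))
      MeasureTheory.volume 0 (2*Real.pi) :=
    ((hc.comp (continuous_add_right δ)).mul (en_cont n)).intervalIntegrable _ _
  have key4 : (2:ℂ) * A = ∫ t in (0:ℝ)..(2*Real.pi),
      (h t - h (t + δ)) * Complex.exp (-(n:ℂ) * t * Complex.I) := by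
    have : (∫ t in (0:ℝ)..(2*Real.pi),
        (h t - h (t + δ)) * Complex.exp (-(n:ℂ) * t * Complex.I))
        = (∫ t in (0:ℝ)..(2*Real.pi), h t * Complex.exp (-(n:ℂ) * t * Complex.I))
          - ∫ t in (0:ℝ)..(2*Real.pi), h (t + δ) * Complex.exp (-(n:ℂ) * t * Complex.I) := by
      rw [← intervalIntegral.integral_sub i1 i2]
      congr 1; funext t; ring
    have hB : (∫ t in (0:ℝ)..(2*Real.pi),
        h (t + δ) * Complex.exp (-(n:ℂ) * t * Complex.I)) = -A := by
      rw [key3, neg_neg]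
    rw [this, hB, ← hA]
    ring
  have bnd : ‖∫ t in (0:ℝ)..(2*Real.pi),
      (h t - h (t + δ)) * Complex.exp (-(n:ℂ) * t * Complex.I)‖
      ≤ (C * δ ^ β) * |2*Real.pi - 0| := by
    apply intervalIntegral.norm_integral_le_of_norm_le_const
    intro t _
    rw [norm_mul, en_norm, mul_one]
    have h1 := hH t (t + δ) (by rw [show t - (t+δ) = -δ by ring, abs_neg, abs_of_pos hδ0]; exact hδπ)
    rwa [show t - (t+δ) = -δ by ring, abs_neg, abs_of_pos hδ0] at h1
  have h2A : ‖(2:ℂ) * A‖ = 2 * ‖A‖ := by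
    rw [norm_mul]; norm_num
  have habs : |2*Real.pi - 0| = 2 * Real.pi := by
    rw [sub_zero, abs_of_pos (by positivity)]
  have hAbnd : ‖A‖ ≤ Real.pi * (C * δ ^ β) := by
    have e1 : 2 * ‖A‖ ≤ (C * δ ^ β) * (2 * Real.pi) := by
      rw [← h2A, key4]
      rw [habs] at bnd
      exact bnd
    nlinarith [norm_nonneg A]
  have hδβ : δ ^ β = Real.pi ^ β * (n:ℝ) ^ (-β : ℝ) := by
    rw [hδ, Real.div_rpow Real.pi_pos.le hn0.le, Real.rpow_neg hn0.le, div_eq_mul_inv]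
  calc ‖A‖ ≤ Real.pi * (C * δ ^ β) := hAbnd
    _ = Real.pi * C * Real.pi ^ β * (n:ℝ) ^ (-β : ℝ) := by rw [hδβ]; ring

lemma decay_step {h h' : ℝ → ℂ} (hc : Continuous h)
    (hp : Function.Periodic h (2 * Real.pi)) (hd : ∀ t, HasDerivAt h (h' t) t)
    (hc' : Continuous h') (n : ℕ) :
    (∫ t in (0:ℝ)..(2*Real.pi), h' t * Complex.exp (-(n:ℂ) * t * Complex.I))
      = ((n:ℂ) * Complex.I) *
        ∫ t in (0:ℝ)..(2*Real.pi), h t * Complex.exp (-(n:ℂ) * t * Complex.I) := by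
  have hD : ∀ t ∈ Set.uIcc (0:ℝ) (2*Real.pi),
      HasDerivAt (fun t : ℝ => h t * Complex.exp (-(n:ℂ) * t * Complex.I))
      (h' t * Complex.exp (-(n:ℂ) * t * Complex.I)
        + h t * ((-(n:ℂ) * Complex.I) * Complex.exp (-(n:ℂ) * t * Complex.I))) t :=
    fun t _ => (hd t).mul (en_deriv n t)
  have hint : IntervalIntegrable (fun t : ℝ => h' t * Complex.exp (-(n:ℂ) * t * Complex.I)
        + h t * ((-(n:ℂ) * Complex.I) * Complex.exp (-(n:ℂ) * t * Complex.I)))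
      MeasureTheory.volume 0 (2*Real.pi) :=
    ((hc'.mul (en_cont n)).add
      (hc.mul (continuous_const.mul (en_cont n)))).intervalIntegrable _ _
  have hFTC := intervalIntegral.integral_eq_sub_of_hasDerivAt hD hint
  have h1 : h (2*Real.pi) = h 0 := by have := hp 0; simpa using this
  have hzero : h (2*Real.pi) * Complex.exp (-(n:ℂ) * ((2*Real.pi : ℝ):ℂ) * Complex.I)
      - h 0 * Complex.exp (-(n:ℂ) * ((0:ℝ):ℂ) * Complex.I) = 0 := by
    rw [h1, en_two_pi]
    norm_num
  rw [hzero] at hFTC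
  have hre : (fun t : ℝ => h t * ((-(n:ℂ) * Complex.I) * Complex.exp (-(n:ℂ) * t * Complex.I)))
      = fun t : ℝ => (-(n:ℂ) * Complex.I) *
        (h t * Complex.exp (-(n:ℂ) * t * Complex.I)) := by
    funext t; ring
  have hsplit : (∫ t in (0:ℝ)..(2*Real.pi), (h' t * Complex.exp (-(n:ℂ) * t * Complex.I)
        + h t * ((-(n:ℂ) * Complex.I) * Complex.exp (-(n:ℂ) * t * Complex.I))))
      = (∫ t in (0:ℝ)..(2*Real.pi), h' t * Complex.exp (-(n:ℂ) * t * Complex.I))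
        + (-(n:ℂ) * Complex.I) *
          ∫ t in (0:ℝ)..(2*Real.pi), h t * Complex.exp (-(n:ℂ) * t * Complex.I) := by
    rw [intervalIntegral.integral_add (f := fun t => h' t * Complex.exp (-(n:ℂ) * t * Complex.I))
      (g := fun t => h t * ((-(n:ℂ) * Complex.I) * Complex.exp (-(n:ℂ) * t * Complex.I)))
      ((hc'.mul (en_cont n)).intervalIntegrable _ _)
      ((hc.mul (continuous_const.mul (en_cont n))).intervalIntegrable _ _)]
    congr 1
    rw [hre, ← intervalIntegral.integral_const_mul]
  rw [hsplit] at hFTC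
  linear_combination hFTC

lemma decay {β : ℝ} (hβ0 : 0 < β) (hβ1 : β < 1) :
    ∀ (j : ℕ) (h : ℝ → ℂ), SClass β j h →
    ∃ C > 0, ∀ n : ℕ, 1 ≤ n →
      ‖∫ t in (0:ℝ)..(2*Real.pi), h t * Complex.exp (-(n:ℂ) * t * Complex.I)‖
        ≤ C * (n:ℝ) ^ (-(j:ℝ) - β) := by
  intro j
  induction j with
  | zero =>
    intro h H
    obtain ⟨hc, hp, C, hC, hH⟩ := H
    refine ⟨Real.pi * C * Real.pi ^ β, by positivity, fun n hn => ?_⟩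
    have := decay0 hβ0 hβ1 hc hp hC hH n hn
    convert this using 2
    norm_num
  | succ j ih =>
    intro h H
    obtain ⟨hc, hp, h', hd, H'⟩ := H
    obtain ⟨C, hC, hb⟩ := ih h' H'
    refine ⟨C, hC, fun n hn => ?_⟩
    have hn0 : (0:ℝ) < n := by exact_mod_cast hn
    have heq := decay_step hc hp hd H'.continuous n
    have hb' := hb n hn
    have hnorm : (n:ℝ) * ‖∫ t in (0:ℝ)..(2*Real.pi),
        h t * Complex.exp (-(n:ℂ) * t * Complex.I)‖
        = ‖∫ t in (0:ℝ)..(2*Real.pi), h' t * Complex.exp (-(n:ℂ) * t * Complex.I)‖ := by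
      rw [heq, norm_mul, norm_mul, Complex.norm_I, Complex.norm_natCast, mul_one]
    have hexp : (n:ℝ) ^ (-((j:ℕ)+1 : ℕ) - β : ℝ) = (n:ℝ) ^ (-(j:ℝ) - β) / n := by
      rw [div_eq_mul_inv, ← Real.rpow_neg_one (n:ℝ), ← Real.rpow_add hn0]
      congr 1
      push_cast
      ring
    rw [show (-(((j:ℕ)+1 : ℕ) : ℝ) - β) = (-((j:ℕ)+1 : ℕ) - β : ℝ) by push_cast; ring] at *
    rw [hexp, ← mul_div_assoc, le_div_iff₀ hn0]
    calc ‖∫ t in (0:ℝ)..(2*Real.pi), h t * Complex.exp (-(n:ℂ) * t * Complex.I)‖ * n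
        = (n:ℝ) * ‖∫ t in (0:ℝ)..(2*Real.pi), h t * Complex.exp (-(n:ℂ) * t * Complex.I)‖ := by
          ring
      _ = ‖∫ t in (0:ℝ)..(2*Real.pi), h' t * Complex.exp (-(n:ℂ) * t * Complex.I)‖ := hnorm
      _ ≤ C * (n:ℝ) ^ (-(j:ℝ) - β) := hb'

open MeasureTheory

/-- Fourier coefficients of a `C^{a+β}` function on the unit circle decay like `n^{-a-β}`. -/
theorem fourier_coeff_decay_of_holder
    (a : ℕ) (β : ℝ) (hβ : 0 < β ∧ β < 1) (F : ℕ → ℂ → ℂ)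
    (hcont : ∀ i ≤ a, ContinuousOn (F i) (Metric.sphere (0 : ℂ) 1))
    (hderiv : ∀ i < a, ∀ z ∈ Metric.sphere (0 : ℂ) 1,
      HasDerivWithinAt (F i) (F (i + 1) z) (Metric.sphere (0 : ℂ) 1) z)
    (hHolder : ∃ C > 0, ∀ z₁ ∈ Metric.sphere (0 : ℂ) 1, ∀ z₂ ∈ Metric.sphere (0 : ℂ) 1,
      ‖F a z₁ - F a z₂‖ ≤ C * ‖z₁ - z₂‖ ^ β) :
    ∃ C > 0, ∀ n : ℕ, 1 ≤ n →
      ‖(1 / (2 * (Real.pi : ℂ))) *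
          ∫ t in (0 : ℝ)..(2 * Real.pi),
            F 0 (Complex.exp (t * Complex.I)) * Complex.exp (-(n : ℂ) * t * Complex.I)‖
        ≤ C * (n : ℝ) ^ (-(a : ℝ) - β) := by
  obtain ⟨hβ0, hβ1⟩ := hβ
  have hS : SClass β a (fun t => F 0 (eI t)) :=
    construction hβ0 hβ1 F hcont hderiv hHolder a 0 (by omega)
  obtain ⟨C, hC, hb⟩ := decay hβ0 hβ1 a _ hS
  refine ⟨C / (2 * Real.pi) + 1, by positivity, fun n hn => ?_⟩
  have hb' := hb n hn
  have hnn : (0:ℝ) ≤ (n:ℝ) ^ (-(a:ℝ) - β) := by positivity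
  have hnorm : ‖(1 / (2 * (Real.pi : ℂ)))‖ = 1 / (2 * Real.pi) := by
    simp [abs_of_pos Real.pi_pos]
  rw [norm_mul, hnorm]
  have h1 : (1 / (2*Real.pi)) * ‖∫ t in (0:ℝ)..(2*Real.pi),
      F 0 (Complex.exp (t * Complex.I)) * Complex.exp (-(n:ℂ) * t * Complex.I)‖
      ≤ (1 / (2*Real.pi)) * (C * (n:ℝ) ^ (-(a:ℝ) - β)) := by
    have hb'' : ‖∫ t in (0:ℝ)..(2*Real.pi),
        F 0 (Complex.exp (t * Complex.I)) * Complex.exp (-(n:ℂ) * t * Complex.I)‖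
        ≤ C * (n:ℝ) ^ (-(a:ℝ) - β) := by
      exact hb'
    have : (0:ℝ) < 1 / (2*Real.pi) := by positivity
    nlinarith
  calc (1 / (2*Real.pi)) * ‖∫ t in (0:ℝ)..(2*Real.pi),
        F 0 (Complex.exp (t * Complex.I)) * Complex.exp (-(n:ℂ) * t * Complex.I)‖
      ≤ (1 / (2*Real.pi)) * (C * (n:ℝ) ^ (-(a:ℝ) - β)) := h1
    _ = (C / (2*Real.pi)) * (n:ℝ) ^ (-(a:ℝ) - β) := by ring
    _ ≤ (C / (2*Real.pi) + 1) * (n:ℝ) ^ (-(a:ℝ) - β) := by nlinarith
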